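/- For any fixed k ≥ 3, the following identity of formal power series over ℚ holds: (1 − x)(1 − x^k)(1 − 2x + x^k) · ∑_{n ≥ 0} |𝒱^(k)(n)| x^n = x^{2k} (x − x^k)^2, where |𝒱^(k)(n)| denotes the cardinality of 𝒱^(k)(n) (which is 0 for n < 2k+2). -/

import Mathlib

/-!
Binary strings are modeled as `List Bool`, with `true` = 1 and `false` = 0.
-/

/-- A string `v` is bifix-free if no nonempty proper prefix of `v` equals a
(proper) suffix of `v`. -/
def BifixFree (v : List Bool) : Prop :=
  ∀ p : List Bool, p ≠ [] → p ≠ v → p <+: v → ¬ p <:+ v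

/-- The set `V_n^(k)`: binary strings of length `n` starting with `k` ones,
ending with `k` zeros, whose middle factor `v_{k+1} … v_{n-k}` begins with 0,
ends with 1, and contains neither `k` consecutive 0's nor `k` consecutive 1's. -/
def Vnk (n k : ℕ) : Set (List Bool) :=
  {v | v.length = n ∧
    List.replicate k true <+: v ∧
    List.replicate k false <:+ v ∧
    ((v.drop k).take (n - 2 * k)).head? = some false ∧
    ((v.drop k).take (n - 2 * k)).getLast? = some true ∧
    ¬ List.replicate k false <:+: ((v.drop k).take (n - 2 * k)) ∧
    ¬ List.replicate k true <:+: ((v.drop k).take (n - 2 * k))}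

/-- `𝒱^(k) = ⋃_{i ≥ 2k+2} V_i^(k)`. -/
def VkSet (k : ℕ) : Set (List Bool) := ⋃ i ∈ {i : ℕ | 2 * k + 2 ≤ i}, Vnk i k

/-- `𝒱^(k)(n)`: elements of `𝒱^(k)` of length at most `n`. -/
def VkLe (k n : ℕ) : Set (List Bool) := {v ∈ VkSet k | v.length ≤ n}

/-- The set of binary strings of length `ℓ` that begin with 0, end with 1, and
contain neither `k` consecutive 0's nor `k` consecutive 1's. -/
def Rset (k ℓ : ℕ) : Set (List Bool) :=
  {w | w.length = ℓ ∧ w.head? = some false ∧ w.getLast? = some true ∧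
    ¬ List.replicate k false <:+: w ∧ ¬ List.replicate k true <:+: w}

/-- `r_ℓ^(k)`, with the convention `r_0^(k) = 1`. -/
noncomputable def r (k ℓ : ℕ) : ℕ := if ℓ = 0 then 1 else (Rset k ℓ).ncard

/-- Shifted `k`-generalized Fibonacci numbers: `f_ℓ^(k) = 2^ℓ` for `ℓ ≤ k-1`, and
`f_ℓ^(k) = ∑_{i=1}^{k} f_{ℓ-i}^(k)` for `ℓ ≥ k`. -/
def f (k : ℕ) : ℕ → ℕ
  | ℓ =>
    if h : ℓ < k then 2 ^ ℓ
    else ∑ i ∈ (Finset.range k).attach, f k (ℓ - (i.1 + 1))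
termination_by ℓ => ℓ
decreasing_by
  have hi := i.2
  simp only [Finset.mem_range] at hi
  omega

/-- `S^(k)(n) = ∑_{ℓ=0}^{n} f_ℓ^(k)`. -/
def S (k n : ℕ) : ℕ := ∑ ℓ ∈ Finset.range (n + 1), f k ℓ

/-- `d_ℓ^(k)`: 1 if `ℓ ≡ 0 (mod k)`, -1 if `ℓ ≡ 1 (mod k)`, 0 otherwise. -/
def d (k ℓ : ℕ) : ℤ := if ℓ % k = 0 then 1 else if ℓ % k = 1 then -1 else 0

/-- A set of binary strings is a cross-fix-free code if every element is
bifix-free and, for any two distinct elements `v, v'`, no nonempty prefix of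
`v` (including `v` itself) is a suffix of `v'`, and vice versa. -/
def CrossFixFree (X : Set (List Bool)) : Prop :=
  (∀ v ∈ X, BifixFree v) ∧
  ∀ v ∈ X, ∀ v' ∈ X, v ≠ v' → ∀ p : List Bool, p ≠ [] → p <+: v → ¬ p <:+ v'

/-- A strong cross-fix-free code: cross-fix-free and no codeword is a factor of
another. -/
def StrongCrossFixFree (X : Set (List Bool)) : Prop :=
  CrossFixFree X ∧ ∀ v ∈ X, ∀ v' ∈ X, v ≠ v' → ¬ v <:+: v'

/-- A Dyck word: equal numbers of 1's and 0's, and every prefix has at least as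
many 1's as 0's. -/
def IsDyck (w : List Bool) : Prop :=
  w.count true = w.count false ∧ ∀ p : List Bool, p <+: w → p.count false ≤ p.count true

/-- `𝒟 = { 1α0 : α a Dyck word }`. -/
def Dset : Set (List Bool) := {v | ∃ α : List Bool, IsDyck α ∧ v = true :: (α ++ [false])}

/-- `𝒟(n)`: elements of `𝒟` of length at most `n`. -/
def DLe (n : ℕ) : Set (List Bool) := {v ∈ Dset | v.length ≤ n}


open List

/-- Index characterization of a replicate-infix ("run"). -/
lemma infix_replicate_iff (c : Bool) (k : ℕ) (w : List Bool) :
    List.replicate k c <:+: w ↔ ∃ i, i + k ≤ w.length ∧ ∀ j < k, w[i+j]? = some c := by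
  constructor
  · rintro ⟨s, t, rfl⟩
    refine ⟨s.length, by simp, fun j hj => ?_⟩
    rw [List.getElem?_append, if_pos (by simp; omega), List.getElem?_append,
      if_neg (by omega), List.getElem?_replicate,
      if_pos (by omega)]
  · rintro ⟨i, hik, hv⟩
    have h1 : (w.drop i).take k = List.replicate k c := by
      apply List.eq_replicate_iff.2
      refine ⟨by simp; omega, fun b hb => ?_⟩
      obtain ⟨j, hjlt, hj⟩ := List.mem_iff_getElem.1 hb
      have hlen : j < k := lt_of_lt_of_le hjlt (by simp)
      have h3 : ((w.drop i).take k)[j]? = some b := by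
        rw [List.getElem?_eq_getElem hjlt, hj]
      rw [List.getElem?_take_of_lt hlen, List.getElem?_drop, hv j hlen] at h3
      exact (Option.some_injective _ h3).symm
    exact h1 ▸ ((List.take_prefix k (w.drop i)).isInfix.trans (List.drop_suffix i w).isInfix)

lemma getElem_blocks_lo (a b : ℕ) (u : List Bool) (m : ℕ) (h : m < a) :
    (List.replicate a false ++ List.replicate b true ++ u)[m]? = some false := by
  rw [List.getElem?_append, if_pos (by simp; omega), List.getElem?_append,
    if_pos (by simpa using h), List.getElem?_replicate, if_pos h]

lemma getElem_blocks_mid (a b : ℕ) (u : List Bool) (m : ℕ) (h1 : a ≤ m) (h2 : m < a + b) :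
    (List.replicate a false ++ List.replicate b true ++ u)[m]? = some true := by
  rw [List.getElem?_append, if_pos (by simp; omega), List.getElem?_append,
    if_neg (by simp; omega), List.getElem?_replicate]
  simp only [List.length_replicate]
  rw [if_pos (by omega)]

lemma getElem_blocks_hi (a b : ℕ) (u : List Bool) (m : ℕ) (h1 : a + b ≤ m) :
    (List.replicate a false ++ List.replicate b true ++ u)[m]? = u[m - (a+b)]? := by
  rw [List.getElem?_append, if_neg (by simp; omega)]
  congr 1
  simp only [List.length_append, List.length_replicate]

/-- The common conditions shared by `Rset` elements and the empty string. -/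
def Good (k : ℕ) (w : List Bool) : Prop :=
  (w = [] ∨ (w.head? = some false ∧ w.getLast? = some true)) ∧
    ¬ List.replicate k false <:+: w ∧ ¬ List.replicate k true <:+: w

/-- `Rset'` includes the empty string at length 0. -/
def Rset' (k m : ℕ) : Set (List Bool) := if m = 0 then {([] : List Bool)} else Rset k m

lemma mem_Rset' (k m : ℕ) (hk : 1 ≤ k) (w : List Bool) :
    w ∈ Rset' k m ↔ w.length = m ∧ Good k w := by
  unfold Rset' Good Rset
  split_ifs with h
  · subst h
    constructor
    · rintro rfl
      refine ⟨rfl, Or.inl rfl, ?_, ?_⟩ <;>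
      · rintro ⟨s, t, hst⟩
        simp at hst
        simp [hst.2.1] at hk
    · rintro ⟨h1, -⟩
      simpa using List.length_eq_zero_iff.1 h1
  · simp only [Set.mem_setOf_eq]
    constructor
    · rintro ⟨h1, h2, h3, h4, h5⟩
      exact ⟨h1, Or.inr ⟨h2, h3⟩, h4, h5⟩
    · rintro ⟨h1, h2 | h2, h4, h5⟩
      · exact absurd (h2 ▸ h1).symm h
      · exact ⟨h1, h2.1, h2.2, h4, h5⟩

lemma getLast?_replicate' (n : ℕ) (c : Bool) (h : 1 ≤ n) :
    (List.replicate n c).getLast? = some c := by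
  obtain ⟨m, rfl⟩ : ∃ m, n = m + 1 := ⟨n - 1, by omega⟩
  rw [List.replicate_succ', List.getLast?_append]
  simp

lemma takeWhile_replicate_append (p : Bool → Bool) (n : ℕ) (c : Bool) (l : List Bool)
    (h : p c = true) :
    List.takeWhile p (List.replicate n c ++ l) = List.replicate n c ++ List.takeWhile p l := by
  induction n with
  | zero => simp
  | succ m ih =>
    rw [List.replicate_succ, List.cons_append, List.takeWhile_cons_of_pos h, ih, List.cons_append]

lemma hb_cons (b : ℕ) (hb : 1 ≤ b) (u : List Bool) :
    List.replicate b true ++ u = true :: (List.replicate (b-1) true ++ u) := by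
  obtain ⟨m, rfl⟩ := Nat.exists_eq_add_of_le hb
  simp [List.replicate_succ, add_comm]

lemma extract_a (a b : ℕ) (hb : 1 ≤ b) (u : List Bool) :
    List.takeWhile (fun x => !x) (List.replicate a false ++ List.replicate b true ++ u)
      = List.replicate a false := by
  rw [List.append_assoc, takeWhile_replicate_append _ _ _ _ (by simp), hb_cons b hb,
    List.takeWhile_cons_of_neg (by simp), List.append_nil]

lemma extract_b (b : ℕ) (u : List Bool) (hu : u = [] ∨ u.head? = some false) :
    List.takeWhile (fun x => x) (List.replicate b true ++ u) = List.replicate b true := by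
  rw [takeWhile_replicate_append _ _ _ _ rfl]
  rcases hu with rfl | hu
  · simp
  · rcases u with _ | ⟨x, t⟩
    · simp
    · simp only [List.head?_cons, Option.some_inj] at hu
      subst hu
      rw [List.takeWhile_cons_of_neg (by simp), List.append_nil]

/-- Uniqueness of the block decomposition. -/
lemma blocks_injective (a b a' b' : ℕ) (ha : 1 ≤ a) (hb : 1 ≤ b) (ha' : 1 ≤ a') (hb' : 1 ≤ b')
    (u u' : List Bool) (hu : u = [] ∨ u.head? = some false) (hu' : u' = [] ∨ u'.head? = some false)
    (heq : List.replicate a false ++ List.replicate b true ++ u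
      = List.replicate a' false ++ List.replicate b' true ++ u') :
    a = a' ∧ b = b' ∧ u = u' := by
  have h1 : List.replicate a false = List.replicate a' false := by
    have := congrArg (List.takeWhile (fun x => !x)) heq
    rwa [extract_a a b hb u, extract_a a' b' hb' u'] at this
  have haa : a = a' := by
    have := congrArg List.length h1
    simpa using this
  subst haa
  rw [List.append_assoc, List.append_assoc] at heq
  have h2 := List.append_cancel_left heq
  have h3 : List.replicate b true = List.replicate b' true := by
    have := congrArg (List.takeWhile (fun x => x)) h2
    rwa [extract_b b u hu, extract_b b' u' hu'] at this
  have hbb : b = b' := by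
    have := congrArg List.length h3
    simpa using this
  subst hbb
  exact ⟨rfl, rfl, List.append_cancel_left h2⟩

/-- Appending blocks to a good word produces a good word. -/
lemma blocks_good (k a b : ℕ) (ha1 : 1 ≤ a) (hak : a < k) (hb1 : 1 ≤ b) (hbk : b < k)
    (u : List Bool) (hu : Good k u) :
    Good k (List.replicate a false ++ List.replicate b true ++ u) := by
  obtain ⟨huh, huf, hut⟩ := hu
  refine ⟨Or.inr ⟨?_, ?_⟩, ?_, ?_⟩
  · -- head
    obtain ⟨m, rfl⟩ : ∃ m, a = m + 1 := ⟨a - 1, by omega⟩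
    simp [List.replicate_succ]
  · -- last
    rw [List.append_assoc, List.getLast?_append, List.getLast?_append]
    rcases huh with rfl | ⟨-, hl⟩
    · simp [getLast?_replicate' b true hb1]
    · simp [hl]
  · -- no false run
    rw [_root_.infix_replicate_iff]
    rintro ⟨i, hik, hv⟩
    simp only [List.length_append, List.length_replicate] at hik
    rcases lt_or_ge i a with hia | hia
    · have h1 := hv (a - i) (by omega)
      rw [getElem_blocks_mid a b u (i + (a - i)) (by omega) (by omega)] at h1
      simp at h1
    · rcases lt_or_ge i (a + b) with hib | hib
      · have h1 := hv 0 (by omega)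
        rw [Nat.add_zero, getElem_blocks_mid a b u i hia hib] at h1
        simp at h1
      · apply huf
        rw [_root_.infix_replicate_iff]
        refine ⟨i - (a + b), by omega, fun j hj => ?_⟩
        have h1 := hv j hj
        rw [getElem_blocks_hi a b u (i + j) (by omega)] at h1
        have h2 : i + j - (a + b) = i - (a + b) + j := by omega
        rwa [h2] at h1
  · -- no true run
    rw [_root_.infix_replicate_iff]
    rintro ⟨i, hik, hv⟩
    simp only [List.length_append, List.length_replicate] at hik
    rcases lt_or_ge i a with hia | hia
    · have h1 := hv 0 (by omega)
      rw [Nat.add_zero, getElem_blocks_lo a b u i hia] at h1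
      simp at h1
    · rcases lt_or_ge i (a + b) with hib | hib
      · -- the run must cover position a+b, which is false (head of u) or out of range
        have hcov : a + b < i + k := by omega
        have h1 := hv (a + b - i) (by omega)
        rw [getElem_blocks_hi a b u (i + (a + b - i)) (by omega)] at h1
        have h2 : i + (a + b - i) - (a + b) = 0 := by omega
        rw [h2] at h1
        rcases huh with rfl | ⟨hh, -⟩
        · simp at h1
        · rw [← List.head?_eq_getElem?] at h1
          rw [hh] at h1
          simp at h1
      · apply hut
        rw [_root_.infix_replicate_iff]
        refine ⟨i - (a + b), by omega, fun j hj => ?_⟩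
        have h1 := hv j hj
        rw [getElem_blocks_hi a b u (i + j) (by omega)] at h1
        have h2 : i + j - (a + b) = i - (a + b) + j := by omega
        rwa [h2] at h1

/-- Every element of `Rset k ℓ` decomposes uniquely as `0^a 1^b u`. -/
lemma decomp (k ℓ : ℕ) (hk : 3 ≤ k) (w : List Bool) (hw : w ∈ Rset k ℓ) :
    ∃ a b u, 1 ≤ a ∧ a < k ∧ 1 ≤ b ∧ b < k ∧ Good k u ∧ a + b + u.length = ℓ ∧
      w = List.replicate a false ++ List.replicate b true ++ u := by
  obtain ⟨hlen, hhead, hlast, hf, ht⟩ := hw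
  obtain ⟨t, rfl⟩ : ∃ t, w = false :: t := by
    rcases w with _ | ⟨x, t⟩
    · simp at hhead
    · simp only [List.head?_cons, Option.some_inj] at hhead
      exact ⟨t, by rw [hhead]⟩
  set w0 : List Bool := false :: t with hw0
  have htw : w0.takeWhile (fun x => !x) = List.replicate (w0.takeWhile (fun x => !x)).length false := by
    apply List.eq_replicate_iff.2 ⟨rfl, fun x hx => ?_⟩
    have := List.mem_takeWhile_imp hx
    simpa using this
  set a := (w0.takeWhile (fun x => !x)).length with ha
  set w1 := w0.dropWhile (fun x => !x) with hw1
  have hsplit : w0 = List.replicate a false ++ w1 := by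
    conv_lhs => rw [← List.takeWhile_append_dropWhile (p := fun x => !x) (l := w0)]
    rw [← htw, ← hw1]
  have ha1 : 1 ≤ a := by
    rw [ha, hw0, List.takeWhile_cons_of_pos (by simp)]
    simp
  have hrepw : List.replicate a false <+: w0 := htw ▸ List.takeWhile_prefix _
  have hak : a < k := by
    by_contra hc
    apply hf
    have h1 : List.replicate k false <+: List.replicate a false :=
      ⟨List.replicate (a - k) false, by rw [← List.replicate_add]; congr 1; omega⟩
    exact (h1.trans hrepw).isInfix
  have hw1ne : w1 ≠ [] := by
    intro hnil
    rw [hnil, List.append_nil] at hsplit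
    rw [hsplit, getLast?_replicate' a false ha1] at hlast
    simp at hlast
  have hw1head : w1.head? = some true := by
    have h := List.head?_dropWhile_not (fun x => !x) w0
    rw [← hw1] at h
    rcases hh : w1.head? with _ | x
    · exact absurd (List.head?_eq_none_iff.1 hh) hw1ne
    · rw [hh] at h
      have hx : x = true := by simpa using h
      rw [hx]
  obtain ⟨t1, hw1eq⟩ : ∃ t1, w1 = true :: t1 := by
    rcases w1 with _ | ⟨x, t1⟩
    · exact absurd rfl hw1ne
    · simp only [List.head?_cons, Option.some_inj] at hw1head
      exact ⟨t1, by rw [hw1head]⟩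
  have htw2 : w1.takeWhile (fun x => x) = List.replicate (w1.takeWhile (fun x => x)).length true := by
    apply List.eq_replicate_iff.2 ⟨rfl, fun x hx => ?_⟩
    exact List.mem_takeWhile_imp hx
  set b := (w1.takeWhile (fun x => x)).length with hb
  set u := w1.dropWhile (fun x => x) with hu
  have hsplit2 : w1 = List.replicate b true ++ u := by
    conv_lhs => rw [← List.takeWhile_append_dropWhile (p := fun x => x) (l := w1)]
    rw [← htw2, ← hu]
  have hb1 : 1 ≤ b := by
    rw [hb, hw1eq, List.takeWhile_cons_of_pos (by simp)]
    simp
  have hw1suf : w1 <:+ w0 := hw1 ▸ List.dropWhile_suffix _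
  have hbk : b < k := by
    by_contra hc
    apply ht
    have h1 : List.replicate k true <+: List.replicate b true :=
      ⟨List.replicate (b - k) true, by rw [← List.replicate_add]; congr 1; omega⟩
    have h2 : List.replicate b true <+: w1 := htw2 ▸ List.takeWhile_prefix _
    exact ((h1.trans h2).isInfix).trans hw1suf.isInfix
  have husuf : u <:+ w0 := (hu ▸ List.dropWhile_suffix (fun x => x)).trans hw1suf
  have huhead : u = [] ∨ u.head? = some false := by
    rcases hnu : u with _ | ⟨x, tu⟩
    · exact Or.inl rfl
    · right
      have h := List.head?_dropWhile_not (fun x => x) w1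
      rw [← hu, hnu] at h
      have hx : x = false := by simpa using h
      simp [hx]
  have hugood : Good k u := by
    refine ⟨?_, fun hc => hf (hc.trans husuf.isInfix), fun hc => ht (hc.trans husuf.isInfix)⟩
    rcases huhead with hnil | hh
    · exact Or.inl hnil
    · rcases hnu : u with _ | ⟨x, tu⟩
      · exact Or.inl rfl
      · right
        refine ⟨hnu ▸ hh, ?_⟩
        have : w0.getLast? = u.getLast? := by
          rw [hsplit, hsplit2, ← List.append_assoc, List.getLast?_append]
          rw [hnu]
          simp [List.getLast?_cons]
        rw [hnu] at this
        rw [← this, hlast]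
  refine ⟨a, b, u, ha1, hak, hb1, hbk, hugood, ?_, ?_⟩
  · have : w0.length = a + (b + u.length) := by
      rw [hsplit, hsplit2]
      simp
    omega
  · rw [hsplit, hsplit2, List.append_assoc]

lemma Rset_finite (k ℓ : ℕ) : (Rset k ℓ).Finite :=
  (List.finite_length_eq Bool ℓ).subset (fun _ hw => hw.1)

lemma Rset'_finite (k m : ℕ) : (Rset' k m).Finite := by
  unfold Rset'
  split_ifs
  · exact Set.finite_singleton _
  · exact Rset_finite k m

lemma r_eq_ncard (k m : ℕ) : r k m = (Rset' k m).ncard := by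
  unfold r Rset'
  split_ifs
  · simp
  · rfl

lemma ncard_biUnion_finset {α ι : Type*} (s : Finset ι) (F : ι → Set α)
    (hfin : ∀ i ∈ s, (F i).Finite)
    (hdisj : ∀ i ∈ s, ∀ j ∈ s, i ≠ j → Disjoint (F i) (F j)) :
    (⋃ i ∈ s, F i).ncard = ∑ i ∈ s, (F i).ncard := by
  classical
  induction s using Finset.induction with
  | empty => simp
  | @insert a s ha ih =>
    have hun : (⋃ i ∈ insert a s, F i) = F a ∪ ⋃ i ∈ s, F i := by simp
    rw [Finset.sum_insert ha, hun, Set.ncard_union_eq ?_ ?_ ?_,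
      ih (fun i hi => hfin i (Finset.mem_insert_of_mem hi))
        (fun i hi j hj hij => hdisj i (Finset.mem_insert_of_mem hi) j
          (Finset.mem_insert_of_mem hj) hij)]
    · simp only [Set.disjoint_iUnion_right]
      intro i hi
      exact hdisj a (Finset.mem_insert_self a s) i (Finset.mem_insert_of_mem hi)
        (fun h => ha (h ▸ hi))
    · exact hfin a (Finset.mem_insert_self a s)
    · exact Set.Finite.biUnion s.finite_toSet
        (fun i hi => hfin i (Finset.mem_insert_of_mem hi))

/-- The index set for the block decomposition. -/
def P (k ℓ : ℕ) : Finset (ℕ × ℕ) :=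
  (Finset.Icc 1 (k-1) ×ˢ Finset.Icc 1 (k-1)).filter (fun p => p.1 + p.2 ≤ ℓ)

lemma Rset_eq_biUnion (k ℓ : ℕ) (hk : 3 ≤ k) (hl : 1 ≤ ℓ) :
    Rset k ℓ = ⋃ p ∈ P k ℓ,
      ((List.replicate p.1 false ++ List.replicate p.2 true) ++ ·) '' Rset' k (ℓ - p.1 - p.2) := by
  ext w
  simp only [Set.mem_iUnion, exists_prop]
  constructor
  · intro hw
    obtain ⟨a, b, u, ha1, hak, hb1, hbk, hug, hlen, heq⟩ := decomp k ℓ hk w hw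
    refine ⟨(a, b), ?_, u, ?_, ?_⟩
    · simp only [P, Finset.mem_filter, Finset.mem_product, Finset.mem_Icc]
      exact ⟨⟨⟨ha1, by omega⟩, ⟨hb1, by omega⟩⟩, by omega⟩
    · exact (mem_Rset' k _ (by omega) u).2 ⟨by omega, hug⟩
    · exact heq.symm
  · rintro ⟨p, hp, u, hu, rfl⟩
    simp only [P, Finset.mem_filter, Finset.mem_product, Finset.mem_Icc] at hp
    obtain ⟨⟨⟨hp1, hp2⟩, ⟨hq1, hq2⟩⟩, hle⟩ := hp
    obtain ⟨hulen, hug⟩ := (mem_Rset' k _ (by omega) u).1 hu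
    have hgood := blocks_good k p.1 p.2 hp1 (by omega) hq1 (by omega) u hug
    have hmem := (mem_Rset' k ℓ (by omega) _).2
      ⟨by simp [hulen]; omega, hgood⟩
    have hRR : Rset' k ℓ = Rset k ℓ := by unfold Rset'; rw [if_neg (by omega)]
    rw [hRR] at hmem
    exact hmem

/-- The fundamental recurrence for `r`. -/
lemma r_rec (k ℓ : ℕ) (hk : 3 ≤ k) (hl : 1 ≤ ℓ) :
    r k ℓ = ∑ p ∈ P k ℓ, r k (ℓ - p.1 - p.2) := by
  have hr : r k ℓ = (Rset k ℓ).ncard := by unfold r; rw [if_neg (by omega)]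
  rw [hr, Rset_eq_biUnion k ℓ hk hl, ncard_biUnion_finset]
  · refine Finset.sum_congr rfl (fun p hp => ?_)
    rw [Set.ncard_image_of_injective _ (fun x y h => List.append_cancel_left h),
      r_eq_ncard]
  · intro p hp
    exact ((Rset'_finite k _).image _)
  · intro p hp q hq hpq
    simp only [P, Finset.mem_filter, Finset.mem_product, Finset.mem_Icc] at hp hq
    rw [Set.disjoint_left]
    rintro x ⟨u, hu, rfl⟩ ⟨u', hu', heq⟩
    obtain ⟨-, hgu⟩ := (mem_Rset' k _ (by omega) u).1 hu
    obtain ⟨-, hgu'⟩ := (mem_Rset' k _ (by omega) u').1 hu'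
    have hhu : u = [] ∨ u.head? = some false := by
      rcases hgu.1 with h | h
      · exact Or.inl h
      · exact Or.inr h.1
    have hhu' : u' = [] ∨ u'.head? = some false := by
      rcases hgu'.1 with h | h
      · exact Or.inl h
      · exact Or.inr h.1
    have heq' : List.replicate q.1 false ++ List.replicate q.2 true ++ u'
        = List.replicate p.1 false ++ List.replicate p.2 true ++ u := by
      rw [List.append_assoc, List.append_assoc]
      simpa using heq
    obtain ⟨h1, h2, -⟩ := blocks_injective q.1 q.2 p.1 p.2 (by omega) (by omega) (by omega)
      (by omega) u' u hhu' hhu heq'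
    exact hpq (Prod.ext h1.symm h2.symm)

lemma drop_replicate_append (k : ℕ) (c : Bool) (u : List Bool) :
    (List.replicate k c ++ u).drop k = u := by
  have : (List.replicate k c ++ u).drop (List.replicate k c).length = u := List.drop_left
  simpa using this

lemma Vnk_eq_image (k n : ℕ) (hk : 1 ≤ k) (hn : 2*k+2 ≤ n) :
    Vnk n k = (fun w => List.replicate k true ++ (w ++ List.replicate k false)) ''
      Rset k (n - 2*k) := by
  ext v
  constructor
  · rintro ⟨h1, ⟨t, ht⟩, ⟨s, hs⟩, h4, h5, h6, h7⟩
    have hdrop : v.drop k = t := by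
      rw [← ht, drop_replicate_append]
    have hslen : s.length = n - k := by
      have := congrArg List.length hs
      simp at this
      omega
    have hts : t = s.drop k ++ List.replicate k false := by
      rw [← hdrop, ← hs, List.drop_append_of_le_length (by omega)]
    have hmidlen : (s.drop k).length = n - 2*k := by simp [hslen]; omega
    have hmid : (v.drop k).take (n - 2*k) = s.drop k := by
      rw [hdrop, hts, List.take_left' hmidlen]
    refine ⟨s.drop k, ⟨hmidlen, hmid ▸ h4, hmid ▸ h5, hmid ▸ h6, hmid ▸ h7⟩, ?_⟩
    simp only
    rw [← ht, hts]
  · rintro ⟨w, ⟨hwl, hwh, hwt, hwf, hwtr⟩, rfl⟩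
    simp only
    have hdrop : (List.replicate k true ++ (w ++ List.replicate k false)).drop k
        = w ++ List.replicate k false := drop_replicate_append _ _ _
    have hmid : ((List.replicate k true ++ (w ++ List.replicate k false)).drop k).take (n - 2*k)
        = w := by
      rw [hdrop, List.take_left' hwl]
    refine ⟨by simp [hwl]; omega, ⟨w ++ List.replicate k false, rfl⟩,
      ⟨List.replicate k true ++ w, by rw [List.append_assoc]⟩, ?_, ?_, ?_, ?_⟩ <;>
      rw [hmid] <;> assumption

lemma Vnk_ncard (k n : ℕ) (hk : 3 ≤ k) (hn : 2*k+2 ≤ n) :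
    (Vnk n k).ncard = r k (n - 2*k) := by
  rw [Vnk_eq_image k n (by omega) hn, Set.ncard_image_of_injective _ ?_]
  · unfold r
    rw [if_neg (by omega)]
  · intro x y h
    simp only at h
    have h2 := List.append_cancel_left h
    exact List.append_cancel_right h2

lemma Vnk_finite (k n : ℕ) : (Vnk n k).Finite :=
  (List.finite_length_eq Bool n).subset (fun _ hw => hw.1)

lemma mem_VkSet_iff (k : ℕ) (v : List Bool) :
    v ∈ VkSet k ↔ 2*k+2 ≤ v.length ∧ v ∈ Vnk v.length k := by
  unfold VkSet
  simp only [Set.mem_iUnion, Set.mem_setOf_eq, exists_prop]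
  constructor
  · rintro ⟨i, hi, hv⟩
    have : v.length = i := hv.1
    exact ⟨by omega, this ▸ hv⟩
  · rintro ⟨h1, h2⟩
    exact ⟨v.length, h1, h2⟩

lemma VkLe_finite (k n : ℕ) : (VkLe k n).Finite :=
  (List.finite_length_le Bool n).subset (fun _ hw => hw.2)

lemma VkLe_empty (k n : ℕ) (hn : n < 2*k+2) : VkLe k n = ∅ := by
  ext v
  simp only [VkLe, Set.mem_setOf_eq, Set.mem_empty_iff_false, iff_false, not_and]
  intro hv hlen
  have := (mem_VkSet_iff k v).1 hv
  omega

lemma VkLe_ncard_succ (k n : ℕ) (hk : 3 ≤ k) (hn : 2*k+2 ≤ n) :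
    (VkLe k n).ncard = (VkLe k (n-1)).ncard + r k (n - 2*k) := by
  have hsplit : VkLe k n = VkLe k (n-1) ∪ Vnk n k := by
    ext v
    simp only [VkLe, Set.mem_setOf_eq, Set.mem_union]
    constructor
    · rintro ⟨hv, hlen⟩
      rcases Nat.lt_or_ge v.length n with h | h
      · exact Or.inl ⟨hv, by omega⟩
      · have hlv : v.length = n := by omega
        have := (mem_VkSet_iff k v).1 hv
        exact Or.inr (hlv ▸ this.2)
    · rintro (⟨hv, hlen⟩ | hv)
      · exact ⟨hv, by omega⟩
      · have hlv : v.length = n := hv.1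
        exact ⟨(mem_VkSet_iff k v).2 ⟨by omega, hlv ▸ hv⟩, by omega⟩
  have hdisj : Disjoint (VkLe k (n-1)) (Vnk n k) := by
    rw [Set.disjoint_left]
    rintro v ⟨-, hlen⟩ hv
    have : v.length = n := hv.1
    omega
  rw [hsplit, Set.ncard_union_eq hdisj (VkLe_finite k (n-1)) (Vnk_finite k n),
    Vnk_ncard k n hk hn]

lemma r_zero (k : ℕ) : r k 0 = 1 := by unfold r; rw [if_pos rfl]

lemma r_one (k : ℕ) : r k 1 = 0 := by
  unfold r
  rw [if_neg one_ne_zero]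
  convert Set.ncard_empty (List Bool)
  ext w
  simp only [Rset, Set.mem_setOf_eq, Set.mem_empty_iff_false, iff_false]
  rintro ⟨h1, h2, h3, -⟩
  rcases w with _ | ⟨x, t⟩
  · simp at h1
  · have ht : t = [] := by simpa using h1
    subst ht
    simp only [List.head?_cons, Option.some_inj] at h2
    simp only [List.getLast?_singleton, Option.some_inj] at h3
    rw [h2] at h3
    exact Bool.false_ne_true h3

noncomputable def Rps (k : ℕ) : PowerSeries ℚ := PowerSeries.mk fun n => (r k n : ℚ)
noncomputable def gps (k : ℕ) : PowerSeries ℚ :=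
  ∑ i ∈ Finset.Icc 1 (k-1), PowerSeries.X ^ i
noncomputable def Aps (k : ℕ) : PowerSeries ℚ := PowerSeries.mk fun n => ((VkLe k n).ncard : ℚ)

lemma coeff_g_sq_mul (k n : ℕ) :
    PowerSeries.coeff n ((gps k)^2 * Rps k) =
      ∑ p ∈ Finset.Icc 1 (k-1) ×ˢ Finset.Icc 1 (k-1),
        if p.1 + p.2 ≤ n then (r k (n - (p.1 + p.2)) : ℚ) else 0 := by
  have hg2 : (gps k)^2 = ∑ p ∈ Finset.Icc 1 (k-1) ×ˢ Finset.Icc 1 (k-1),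
      (PowerSeries.X : PowerSeries ℚ) ^ (p.1 + p.2) := by
    rw [pow_two, gps, Finset.sum_mul_sum]
    rw [Finset.sum_product]
    simp_rw [pow_add]
  rw [hg2, Finset.sum_mul, map_sum]
  refine Finset.sum_congr rfl (fun p hp => ?_)
  rw [PowerSeries.coeff_X_pow_mul']
  split_ifs with h
  · rw [Rps, PowerSeries.coeff_mk]
  · rfl

lemma key_R (k : ℕ) (hk : 3 ≤ k) : (1 - (gps k)^2) * Rps k = 1 := by
  ext n
  rw [sub_mul, one_mul, map_sub, coeff_g_sq_mul, PowerSeries.coeff_one]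
  rcases Nat.eq_zero_or_pos n with rfl | hn
  · rw [if_pos rfl]
    have hz : ∑ p ∈ Finset.Icc 1 (k-1) ×ˢ Finset.Icc 1 (k-1),
        (if p.1 + p.2 ≤ 0 then (r k (0 - (p.1 + p.2)) : ℚ) else 0) = 0 := by
      refine Finset.sum_eq_zero (fun p hp => ?_)
      simp only [Finset.mem_product, Finset.mem_Icc] at hp
      rw [if_neg (by omega)]
    rw [hz, sub_zero, Rps, PowerSeries.coeff_mk, r_zero]
    norm_num
  · rw [if_neg (by omega), Rps, PowerSeries.coeff_mk]
    rw [sub_eq_zero, r_rec k n hk hn]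
    push_cast
    simp only [P]
    rw [Finset.sum_filter]
    refine Finset.sum_congr rfl (fun p hp => ?_)
    split_ifs with h
    · have harg : n - p.1 - p.2 = n - (p.1 + p.2) := by omega
      rw [harg]
    · rfl

lemma step1 (k : ℕ) (hk : 3 ≤ k) :
    (1 - PowerSeries.X) * Aps k = PowerSeries.X ^ (2*k) * (Rps k - 1) := by
  ext n
  rw [sub_mul, one_mul, map_sub]
  have hXA : PowerSeries.coeff n (PowerSeries.X * Aps k)
      = if 1 ≤ n then ((VkLe k (n-1)).ncard : ℚ) else 0 := by
    rw [← pow_one (PowerSeries.X : PowerSeries ℚ), PowerSeries.coeff_X_pow_mul']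
    split_ifs with h
    · rw [Aps, PowerSeries.coeff_mk]
    · rfl
  rw [hXA, Aps, PowerSeries.coeff_mk, PowerSeries.coeff_X_pow_mul']
  have hco : ∀ m, PowerSeries.coeff m (Rps k - 1)
      = (r k m : ℚ) - if m = 0 then 1 else 0 := by
    intro m
    rw [map_sub, PowerSeries.coeff_one, Rps, PowerSeries.coeff_mk]
  simp only [hco]
  have hzero : ∀ m, m < 2*k+2 → ((VkLe k m).ncard : ℚ) = 0 := by
    intro m hm
    rw [VkLe_empty k m hm, Set.ncard_empty]
    norm_num
  split_ifs with h1 h2 h3 h2 h3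
  · -- 1 ≤ n, 2k ≤ n, n - 2k = 0 : n = 2k
    rw [hzero n (by omega), hzero (n-1) (by omega), h3, r_zero]
    norm_num
  · -- 1 ≤ n, 2k ≤ n, n - 2k ≠ 0
    rcases Nat.lt_or_ge n (2*k+2) with h4 | h4
    · -- n = 2k+1
      have : n - 2*k = 1 := by omega
      rw [hzero n (by omega), hzero (n-1) (by omega), this, r_one]
      norm_num
    · rw [VkLe_ncard_succ k n hk h4]
      push_cast
      ring
  · -- 1 ≤ n, ¬(2k ≤ n)
    rw [hzero n (by omega), hzero (n-1) (by omega)]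
    norm_num
  · exact absurd (by omega : (1:ℕ) ≤ n) h1
  · exact absurd (by omega : (1:ℕ) ≤ n) h1
  · -- n = 0
    rw [hzero n (by omega)]
    norm_num

lemma gtel (k : ℕ) (hk : 1 ≤ k) :
    (1 - PowerSeries.X) * gps k = (PowerSeries.X : PowerSeries ℚ) - PowerSeries.X ^ k := by
  have hIcc : Finset.Icc 1 (k-1) = Finset.Ico 1 k := by
    rw [← Finset.Ico_add_one_right_eq_Icc]
    congr 1
    omega
  have hsum : (∑ i ∈ Finset.range k, (PowerSeries.X : PowerSeries ℚ)^i) = 1 + gps k := by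
    rw [Finset.range_eq_Ico, Finset.sum_eq_sum_Ico_succ_bot (by omega), pow_zero, gps, hIcc]
  have hgeom := geom_sum_mul (PowerSeries.X : PowerSeries ℚ) k
  rw [hsum] at hgeom
  linear_combination -hgeom

/-- For any `k ≥ 3`, as formal power series over `ℚ`:
`(1-x)(1-x^k)(1-2x+x^k) · ∑_n |𝒱^(k)(n)| x^n = x^{2k}(x-x^k)^2`. -/
theorem stmt_11 (k : ℕ) (hk : 3 ≤ k) :
    (1 - PowerSeries.X) * (1 - PowerSeries.X ^ k) *
        (1 - 2 * PowerSeries.X + PowerSeries.X ^ k) *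
        PowerSeries.mk (fun n => ((VkLe k n).ncard : ℚ)) =
      PowerSeries.X ^ (2 * k) * (PowerSeries.X - PowerSeries.X ^ k) ^ 2 := by
  have hgt := gtel k (by omega)
  have h1k : (1 - PowerSeries.X ^ k : PowerSeries ℚ) = (1 - PowerSeries.X) * (1 + gps k) := by
    rw [mul_add, mul_one, hgt]
    ring
  have h2k : (1 - 2 * PowerSeries.X + PowerSeries.X ^ k : PowerSeries ℚ)
      = (1 - PowerSeries.X) * (1 - gps k) := by
    rw [mul_sub, mul_one, hgt]
    ring
  have hA : PowerSeries.mk (fun n => ((VkLe k n).ncard : ℚ)) = Aps k := rfl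
  have hsub : (1 - (gps k)^2) * (Rps k - 1) = (gps k)^2 := by
    rw [mul_sub, key_R k hk, mul_one]
    ring
  rw [hA, h1k, h2k]
  calc (1 - PowerSeries.X) * ((1 - PowerSeries.X) * (1 + gps k))
        * ((1 - PowerSeries.X) * (1 - gps k)) * Aps k
      = (1 - PowerSeries.X) * (1 - PowerSeries.X) * (1 + gps k) * (1 - gps k)
        * ((1 - PowerSeries.X) * Aps k) := by ring
    _ = (1 - PowerSeries.X) * (1 - PowerSeries.X) * (1 + gps k) * (1 - gps k)
        * (PowerSeries.X ^ (2*k) * (Rps k - 1)) := by rw [step1 k hk]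
    _ = PowerSeries.X ^ (2*k) * (1 - PowerSeries.X) * (1 - PowerSeries.X)
        * ((1 - (gps k)^2) * (Rps k - 1)) := by ring
    _ = PowerSeries.X ^ (2*k) * (1 - PowerSeries.X) * (1 - PowerSeries.X) * (gps k)^2 := by
        rw [hsub]
    _ = PowerSeries.X ^ (2*k) * ((1 - PowerSeries.X) * gps k)^2 := by ring
    _ = PowerSeries.X ^ (2*k) * (PowerSeries.X - PowerSeries.X ^ k)^2 := by rw [hgt]
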